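/- Let T > 0 and let B : [0,T]×ℝ^d → ℝ^d be Borel measurable, such that for a.e. t ∈ [0,T] the map x ↦ B(t,x) is differentiable, for every R > 0 the function t ↦ sup_{|x| ≤ R} ‖D_x B(t,x)‖ is integrable on [0,T], and ∂_{x_i} B^j(t,x) ≥ 0 for all i ≠ j, a.e. t ∈ [0,T] and all x ∈ ℝ^d. Let X, Y : [0,T] → ℝ^d be Lipschitz continuous with X(0) ≤ Y(0) coordinatewise, and suppose that for a.e. t ∈ [0,T], X'(t) ≤ B(t, X(t)) and Y'(t) ≥ B(t, Y(t)) coordinatewise. Then X(t) ≤ Y(t) coordinatewise for all t ∈ [0,T]. -/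

import Mathlib

open MeasureTheory Set Filter
open scoped ENNReal Topology

open intervalIntegral in
theorem sub_le_integral_slope {f φ : ℝ → ℝ} {a b : ℝ} (hab : a ≤ b)
    (hcont : ContinuousOn f (Icc a b)) (φint : IntegrableOn φ (Icc a b))
    (hslope : ∀ x ∈ Ico a b, ∀ r : ℝ, φ x < r →
      ∃ᶠ z in 𝓝[>] x, f z - f x ≤ (z - x) * r) :
    f b - f a ≤ ∫ y in a..b, φ y := by
  refine le_of_forall_pos_le_add fun ε εpos => ?_
  rcases exists_lt_lowerSemicontinuous_integral_lt φ φint εpos with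
    ⟨G', f_lt_G', G'cont, G'int, G'lt_top, hG'⟩
  set s := {t | f t - f a ≤ ∫ u in a..t, (G' u).toReal} ∩ Icc a b
  have s_closed : IsClosed s := by
    have : ContinuousOn (fun t => (f t - f a, ∫ u in a..t, (G' u).toReal)) (Icc a b) := by
      rw [← uIcc_of_le hab] at G'int hcont ⊢
      exact (hcont.sub continuousOn_const).prodMk (intervalIntegral.continuousOn_primitive_interval G'int)
    simp only [s, inter_comm]
    exact this.preimage_isClosed_of_isClosed isClosed_Icc OrderClosedTopology.isClosed_le'
  have main : Icc a b ⊆ {t | f t - f a ≤ ∫ u in a..t, (G' u).toReal} := by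
    refine s_closed.Icc_subset_of_forall_exists_gt
      (by simp only [intervalIntegral.integral_same, mem_setOf_eq, sub_self, le_rfl]) fun t ht v t_lt_v => ?_
    obtain ⟨y, φ_lt_y', y_lt_G'⟩ : ∃ y : ℝ, (φ t : EReal) < y ∧ (y : EReal) < G' t :=
      EReal.lt_iff_exists_real_btwn.1 (f_lt_G' t)
    have I1 : ∀ᶠ u in 𝓝[>] t, (u - t) * y ≤ ∫ w in t..u, (G' w).toReal := by
      have B : ∀ᶠ u in 𝓝 t, (y : EReal) < G' u := G'cont.lowerSemicontinuousAt _ _ y_lt_G'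
      rcases mem_nhds_iff_exists_Ioo_subset.1 B with ⟨m, M, ⟨hm, hM⟩, H⟩
      have : Ioo t (min M b) ∈ 𝓝[>] t := Ioo_mem_nhdsGT (lt_min hM ht.right.right)
      filter_upwards [this] with u hu
      have I : Icc t u ⊆ Icc a b := Icc_subset_Icc ht.2.1 (hu.2.le.trans (min_le_right _ _))
      calc
        (u - t) * y = ∫ _ in Icc t u, y := by
          simp only [hu.left.le, MeasureTheory.integral_const, smul_eq_mul, measureReal_def, sub_nonneg,
            MeasurableSet.univ, Real.volume_Icc, Measure.restrict_apply, univ_inter,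
            ENNReal.toReal_ofReal]
        _ ≤ ∫ w in t..u, (G' w).toReal := by
          rw [intervalIntegral.integral_of_le hu.1.le, ← integral_Icc_eq_integral_Ioc]
          apply setIntegral_mono_ae_restrict
          · exact integrableOn_const measure_Icc_lt_top.ne
          · exact IntegrableOn.mono_set G'int I
          · have C1 : ∀ᵐ x : ℝ ∂volume.restrict (Icc t u), G' x < ∞ :=
              ae_mono (Measure.restrict_mono I le_rfl) G'lt_top
            have C2 : ∀ᵐ x : ℝ ∂volume.restrict (Icc t u), x ∈ Icc t u :=
              ae_restrict_mem measurableSet_Icc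
            filter_upwards [C1, C2] with x G'x hx
            apply EReal.coe_le_coe_iff.1
            have : x ∈ Ioo m M := by
              simp only [hm.trans_le hx.left,
                (hx.right.trans_lt hu.right).trans_le (min_le_left M b), mem_Ioo, and_self_iff]
            refine (H this).out.le.trans_eq ?_
            exact (EReal.coe_toReal G'x.ne (f_lt_G' x).ne_bot).symm
    have I2 : ∃ᶠ u in 𝓝[>] t, f u - f t ≤ (u - t) * y :=
      hslope t ht.2 y (by exact_mod_cast φ_lt_y')
    have I3 : ∃ᶠ u in 𝓝[>] t, f u - f t ≤ ∫ w in t..u, (G' w).toReal :=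
      I2.mp (I1.mono fun u h1 h2 => h2.trans h1)
    have I4 : ∀ᶠ u in 𝓝[>] t, u ∈ Ioc t (min v b) := by
      refine mem_nhdsGT_iff_exists_Ioc_subset.2 ⟨min v b, ?_, Subset.rfl⟩
      simp only [lt_min_iff, mem_Ioi]
      exact ⟨t_lt_v, ht.2.2⟩
    rcases (I3.and_eventually I4).exists with ⟨x, hx, h'x⟩
    refine ⟨x, ?_, Ioc_subset_Ioc le_rfl (min_le_left _ _) h'x⟩
    calc
      f x - f a = f t - f a + (f x - f t) := by abel
      _ ≤ (∫ w in a..t, (G' w).toReal) + ∫ w in t..x, (G' w).toReal := add_le_add ht.1 hx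
      _ = ∫ w in a..x, (G' w).toReal := by
        apply intervalIntegral.integral_add_adjacent_intervals
        · rw [intervalIntegrable_iff_integrableOn_Ioc_of_le ht.2.1]
          exact IntegrableOn.mono_set G'int
            (Ioc_subset_Icc_self.trans (Icc_subset_Icc le_rfl ht.2.2.le))
        · rw [intervalIntegrable_iff_integrableOn_Ioc_of_le h'x.1.le]
          apply IntegrableOn.mono_set G'int
          exact Ioc_subset_Icc_self.trans (Icc_subset_Icc ht.2.1 (h'x.2.trans (min_le_right _ _)))
  calc
    f b - f a ≤ ∫ y in a..b, (G' y).toReal := main (right_mem_Icc.2 hab)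
    _ ≤ (∫ y in a..b, φ y) + ε := by
      rw [intervalIntegral.integral_of_le hab, intervalIntegral.integral_of_le hab,
        ← integral_Icc_eq_integral_Ioc, ← integral_Icc_eq_integral_Ioc]
      exact hG'.le

set_option maxHeartbeats 1000000 in
theorem lip_sub_le_integral {f φ : ℝ → ℝ} {K : NNReal} {a b : ℝ} (hab : a ≤ b)
    (hf : LipschitzWith K f) (φint : IntegrableOn φ (Icc a b))
    (hae : ∀ᵐ t ∂volume.restrict (Icc a b), ∃ f', HasDerivAt f f' t ∧ f' ≤ φ t) :
    f b - f a ≤ ∫ y in a..b, φ y := by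
  classical
  refine le_of_forall_pos_le_add fun ε εpos => ?_
  set p : ℝ → Prop := fun t => ∃ f', HasDerivAt f f' t ∧ f' ≤ φ t with hp
  have hN : volume ({t | ¬ p t} ∩ Icc a b) = 0 := by
    rw [← Measure.restrict_apply' measurableSet_Icc]
    exact hae
  set h : ℝ → ℝ := fun t => |φ t| + ((K : ℝ) + 1) with hh
  have hint : Integrable h (volume.restrict (Icc a b)) := φint.abs.add (integrable_const _)
  have hlt : ∫⁻ t, ENNReal.ofReal (h t) ∂volume.restrict (Icc a b) ≠ ∞ := by
    apply ne_of_lt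
    refine lt_of_le_of_lt (lintegral_mono fun t => Real.ofReal_le_enorm (h t)) hint.2
  obtain ⟨δ, δpos, hδ⟩ := exists_pos_setLIntegral_lt_of_measure_lt hlt
    (ε := ENNReal.ofReal ε) (ENNReal.ofReal_pos.2 εpos).ne'
  obtain ⟨U, hUsub, hUopen, hUmeas⟩ :=
    Set.exists_isOpen_lt_of_lt ({t | ¬ p t} ∩ Icc a b) δ (by rw [hN]; exact δpos)
  have hμU : (volume.restrict (Icc a b)) U < δ := by
    rw [Measure.restrict_apply' measurableSet_Icc]
    exact lt_of_le_of_lt (measure_mono Set.inter_subset_left) hUmeas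
  have hUsmall : ∫⁻ t in U, ENNReal.ofReal (h t) ∂volume.restrict (Icc a b) < ENNReal.ofReal ε := hδ U hμU
  set ψ : ℝ → ℝ := fun t => if t ∈ U then (K : ℝ) + 1 else φ t with hψ
  have hψint : IntegrableOn ψ (Icc a b) := by
    have heq : ψ = U.piecewise (fun _ => (K : ℝ) + 1) φ := rfl
    rw [heq]
    exact MeasureTheory.Integrable.piecewise hUopen.measurableSet
      (integrable_const _).integrableOn φint.integrableOn
  have key : f b - f a ≤ ∫ y in a..b, ψ y := by
    apply sub_le_integral_slope hab hf.continuous.continuousOn hψint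
    intro x hx r hr
    by_cases hxU : x ∈ U
    · rw [hψ] at hr
      simp only [hxU, if_pos] at hr
      apply Filter.Eventually.frequently
      filter_upwards [self_mem_nhdsWithin] with z hz
      have h1 : f z - f x ≤ (K : ℝ) * (z - x) := by
        have h2 : |f z - f x| ≤ (K : ℝ) * |z - x| := by
          have := hf.dist_le_mul z x
          rwa [Real.dist_eq, Real.dist_eq] at this
        calc f z - f x ≤ |f z - f x| := le_abs_self _
          _ ≤ (K : ℝ) * |z - x| := h2
          _ = (K : ℝ) * (z - x) := by rw [abs_of_pos (sub_pos.2 hz)]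
      refine h1.trans ?_
      rw [mul_comm]
      exact mul_le_mul_of_nonneg_left
        (le_trans (by linarith [K.coe_nonneg]) hr.le) (sub_pos.2 hz).le
    · have hpx : p x := by
        by_contra hc
        exact hxU (hUsub ⟨hc, Ico_subset_Icc_self hx⟩)
      obtain ⟨f', hd, hle⟩ := hpx
      have hφr : f' < r := by
        rw [hψ] at hr
        simp only [hxU, if_neg, not_false_iff] at hr
        exact lt_of_le_of_lt hle hr
      apply Filter.Eventually.frequently
      filter_upwards [(hd.hasDerivWithinAt (s := Set.Ioi x)).limsup_slope_le'
          (notMem_Ioi.2 le_rfl) hφr, self_mem_nhdsWithin] with z hz hz'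
      have := mul_le_mul_of_nonneg_left hz.le (sub_pos.2 hz'.out).le
      rwa [← smul_eq_mul, sub_smul_slope] at this
  refine key.trans ?_
  have hψ_le : ∀ t, ψ t ≤ φ t + U.indicator h t := by
    intro t
    by_cases htU : t ∈ U
    · simp only [hψ, hh, htU, if_pos, Set.indicator_of_mem]
      have := neg_abs_le (φ t)
      linarith
    · simp [hψ, htU]
  have hind_int : Integrable (U.indicator h) (volume.restrict (Icc a b)) := hint.indicator hUopen.measurableSet
  have hφIoc : IntegrableOn φ (Ioc a b) := φint.mono_set Ioc_subset_Icc_self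
  have hindIoc : IntegrableOn (U.indicator h) (Ioc a b) :=
    MeasureTheory.IntegrableOn.mono_set hind_int Ioc_subset_Icc_self
  rw [intervalIntegral.integral_of_le hab, intervalIntegral.integral_of_le hab]
  have step1 : ∫ y in Ioc a b, ψ y ≤ ∫ y in Ioc a b, (φ y + U.indicator h y) :=
    setIntegral_mono (hψint.mono_set Ioc_subset_Icc_self) (hφIoc.add hindIoc) hψ_le
  refine step1.trans ?_
  rw [MeasureTheory.integral_add hφIoc hindIoc]
  gcongr
  rw [MeasureTheory.setIntegral_indicator hUopen.measurableSet]
  have hnn : 0 ≤ᵐ[volume.restrict (Ioc a b ∩ U)] h := by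
    filter_upwards with t
    have := abs_nonneg (φ t)
    simp only [hh]
    positivity
  have hmeas' : AEStronglyMeasurable h (volume.restrict (Ioc a b ∩ U)) :=
    hint.1.mono_measure
      (Measure.restrict_mono (Set.inter_subset_left.trans Ioc_subset_Icc_self) le_rfl)
  have hfin : ∫⁻ t in Ioc a b ∩ U, ENNReal.ofReal (h t) ∂volume
      ≤ ∫⁻ t in U, ENNReal.ofReal (h t) ∂volume.restrict (Icc a b) := by
    rw [Measure.restrict_restrict hUopen.measurableSet]
    exact lintegral_mono'
      (Measure.restrict_mono (show Ioc a b ∩ U ⊆ U ∩ Icc a b from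
        fun t ht => ⟨ht.2, Ioc_subset_Icc_self ht.1⟩) le_rfl) le_rfl
  have heq : ∫ t in Ioc a b ∩ U, h t
      = (∫⁻ t in Ioc a b ∩ U, ENNReal.ofReal (h t) ∂volume).toReal :=
    integral_eq_lintegral_of_nonneg_ae hnn hmeas'
  rw [heq]
  exact ENNReal.toReal_le_of_le_ofReal εpos.le (hfin.trans hUsmall.le)
open intervalIntegral in
theorem gronwall_zero {u ψ : ℝ → ℝ} {T : ℝ} (hT : 0 ≤ T)
    (hu : ContinuousOn u (Icc 0 T)) (hu0 : u 0 = 0) (hunn : ∀ t ∈ Icc 0 T, 0 ≤ u t)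
    (hψ : IntegrableOn ψ (Icc 0 T)) (hψ0 : 0 ≤ᵐ[volume.restrict (Icc 0 T)] ψ)
    (hkey : ∀ a b : ℝ, 0 ≤ a → a ≤ b → b ≤ T → u b - u a ≤ ∫ s in a..b, ψ s * u s) :
    ∀ t ∈ Icc 0 T, u t = 0 := by
  have hψu : IntegrableOn ψ (uIcc 0 T) := by rwa [uIcc_of_le hT]
  set G : ℝ → ℝ := fun t => ∫ s in (0:ℝ)..t, ψ s with hGdef
  have hGc : ContinuousOn G (Icc 0 T) := by
    have := continuousOn_primitive_interval (a := 0) (b := T) hψu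
    rwa [uIcc_of_le hT] at this
  have hGu := (isCompact_Icc.uniformContinuousOn_of_continuous hGc)
  rw [Metric.uniformContinuousOn_iff] at hGu
  obtain ⟨δ, δpos, hδ⟩ := hGu (1/2) (by norm_num)
  set h : ℝ := δ/2 with hhdef
  have hpos : 0 < h := by positivity
  have hψint : ∀ a b : ℝ, 0 ≤ a → b ≤ T → a ≤ b → IntervalIntegrable ψ volume a b := by
    intro a b h0 hbT hab
    rw [intervalIntegrable_iff_integrableOn_Ioc_of_le hab]
    exact hψ.mono_set (Ioc_subset_Icc_self.trans (Icc_subset_Icc h0 hbT))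
  have hGsub : ∀ a b : ℝ, 0 ≤ a → b ≤ T → a ≤ b → ∫ s in a..b, ψ s = G b - G a := by
    intro a b h0 hbT hab
    have := intervalIntegral.integral_add_adjacent_intervals
      (hψint 0 a (le_refl 0) (hab.trans hbT) h0) (hψint a b h0 hbT hab)
    simp only [hGdef]
    linarith [this]
  have main : ∀ n : ℕ, ∀ t ∈ Icc 0 (min ((n : ℝ) * h) T), u t = 0 := by
    intro n
    induction n with
    | zero =>
      intro t ht
      simp only [Nat.cast_zero, zero_mul, min_eq_left hT] at ht
      have : t = 0 := le_antisymm ht.2 ht.1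
      rw [this, hu0]
    | succ n ih =>
      intro t ht
      set a : ℝ := min ((n : ℝ) * h) T with hadef
      set b : ℝ := min (((n : ℝ) + 1) * h) T with hbdef
      have h0a : 0 ≤ a := le_min (by positivity) hT
      have hab : a ≤ b := min_le_min (by nlinarith) le_rfl
      have hbT : b ≤ T := min_le_right _ _
      have hbah : b ≤ a + h := by
        rcases le_total ((n : ℝ) * h) T with hc | hc
        · rw [hadef, min_eq_left hc]
          calc b ≤ ((n : ℝ) + 1) * h := min_le_left _ _
            _ = (n : ℝ) * h + h := by ring
        · rw [hadef, min_eq_right hc]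
          have : b ≤ T := min_le_right _ _
          linarith
      rcases le_or_gt t a with hta | hta
      · exact ih t ⟨ht.1, hta⟩
      have hua : u a = 0 := ih a ⟨h0a, le_refl a⟩
      have htab : t ∈ Icc a b := ⟨hta.le, by
        rw [hbdef]; push_cast at ht ⊢; exact ht.2⟩
      obtain ⟨τ, hτm, hτmax⟩ := isCompact_Icc.exists_isMaxOn (nonempty_Icc.2 hab)
        (hu.mono (Icc_subset_Icc h0a hbT))
      have hsub : Icc a b ⊆ Icc 0 T := Icc_subset_Icc h0a hbT
      have hM0 : 0 ≤ u τ := hunn τ (hsub hτm)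
      have haτ : a ≤ τ := hτm.1
      have hτT : τ ≤ T := (hτm.2).trans hbT
      have hi1 : IntervalIntegrable (fun s => ψ s * u s) volume a τ :=
        (hψint a τ h0a hτT haτ).mul_continuousOn
          (hu.mono (by rw [uIcc_of_le haτ]; exact Icc_subset_Icc h0a hτT))
      have hi2 : IntervalIntegrable (fun s => ψ s * u τ) volume a τ :=
        (hψint a τ h0a hτT haτ).mul_const _
      have hmono : (∫ s in a..τ, ψ s * u s) ≤ ∫ s in a..τ, ψ s * u τ := by
        apply intervalIntegral.integral_mono_ae_restrict haτ hi1 hi2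
        have hψ0' : 0 ≤ᵐ[volume.restrict (Icc a τ)] ψ :=
          ae_mono (Measure.restrict_mono (Icc_subset_Icc h0a hτT) le_rfl) hψ0
        filter_upwards [ae_restrict_mem measurableSet_Icc, hψ0'] with s hs hs0
        exact mul_le_mul_of_nonneg_left (hτmax ⟨hs.1, hs.2.trans hτm.2⟩) hs0
      have hGτ : (∫ s in a..τ, ψ s) ≤ 1/2 := by
        rw [hGsub a τ h0a hτT haτ]
        have hd : dist (G τ) (G a) < 1/2 := by
          apply hδ τ ⟨h0a.trans haτ, hτT⟩ a ⟨h0a, (haτ.trans hτT)⟩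
          rw [Real.dist_eq, abs_of_nonneg (by linarith)]
          have h2 : τ ≤ a + h := (hτm.2).trans hbah
          have h3 : h = δ / 2 := hhdef
          linarith
        calc G τ - G a ≤ |G τ - G a| := le_abs_self _
          _ = dist (G τ) (G a) := (Real.dist_eq _ _).symm
          _ ≤ 1/2 := hd.le
      have hchain : u τ ≤ (1/2) * u τ := by
        have h1 : u τ - u a ≤ ∫ s in a..τ, ψ s * u s := hkey a τ h0a haτ hτT
        have h2 : (∫ s in a..τ, ψ s * u τ) = (∫ s in a..τ, ψ s) * u τ := by
          rw [← intervalIntegral.integral_mul_const]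
        have h3 : (∫ s in a..τ, ψ s) * u τ ≤ (1/2) * u τ :=
          mul_le_mul_of_nonneg_right hGτ hM0
        rw [hua, sub_zero] at h1
        calc u τ ≤ ∫ s in a..τ, ψ s * u s := h1
          _ ≤ ∫ s in a..τ, ψ s * u τ := hmono
          _ = (∫ s in a..τ, ψ s) * u τ := h2
          _ ≤ (1/2) * u τ := h3
      have hτ0 : u τ ≤ 0 := by linarith
      have : u t ≤ u τ := hτmax htab
      exact le_antisymm (this.trans hτ0) (hunn t (hsub htab))
  intro t ht
  obtain ⟨n, hn⟩ := exists_nat_ge (T / h)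
  have hnh : T ≤ (n : ℝ) * h := by
    rw [div_le_iff₀ hpos] at hn
    exact hn
  have : min ((n : ℝ) * h) T = T := min_eq_right hnh
  exact main n t (by rw [this]; exact ht)

/-- a comparison principle for ODEs driven by a velocity field `B` that is
quasimonotone (`∂_{x_i} B^j ≥ 0` for `i ≠ j`) and locally Lipschitz in space with
integrable-in-time local Lipschitz bounds.  If `X` is a Lipschitz subsolution and `Y` a
Lipschitz supersolution of `Z' = B(t, Z)` (coordinatewise, a.e. in time) with
`X(0) ≤ Y(0)`, then `X(t) ≤ Y(t)` coordinatewise for all `t ∈ [0,T]`. -/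
theorem stmt6 {d : ℕ} (T : ℝ) (hT : 0 < T)
    (B : ℝ → (Fin d → ℝ) → (Fin d → ℝ))
    (hmeas : Measurable (Function.uncurry B))
    (hdiff : ∀ᵐ t ∂volume.restrict (Set.Icc 0 T), Differentiable ℝ (B t))
    (hint : ∀ R : ℝ, 0 < R → ∃ g : ℝ → ℝ, IntegrableOn g (Set.Icc 0 T) ∧
      ∀ᵐ t ∂volume.restrict (Set.Icc 0 T), ∀ x : Fin d → ℝ, ‖x‖ ≤ R →
        ‖fderiv ℝ (B t) x‖ ≤ g t)
    (hoffdiag : ∀ᵐ t ∂volume.restrict (Set.Icc 0 T), ∀ x : Fin d → ℝ, ∀ i j : Fin d,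
      i ≠ j → 0 ≤ fderiv ℝ (B t) x (Pi.single i 1) j)
    (X Y X' Y' : ℝ → (Fin d → ℝ))
    (hX_lip : ∃ K : NNReal, LipschitzOnWith K X (Set.Icc 0 T))
    (hY_lip : ∃ K : NNReal, LipschitzOnWith K Y (Set.Icc 0 T))
    (hXY0 : X 0 ≤ Y 0)
    (hX : ∀ᵐ t ∂volume.restrict (Set.Icc 0 T), HasDerivAt X (X' t) t ∧ X' t ≤ B t (X t))
    (hY : ∀ᵐ t ∂volume.restrict (Set.Icc 0 T), HasDerivAt Y (Y' t) t ∧ B t (Y t) ≤ Y' t) :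
    ∀ t ∈ Set.Icc (0 : ℝ) T, X t ≤ Y t := by
  rcases Nat.eq_zero_or_pos d with hd0 | hd0
  · intro t ht i
    exact absurd i.isLt (by omega)
  have hne : (Finset.univ : Finset (Fin d)).Nonempty := by
    rw [Finset.univ_nonempty_iff]
    exact Fin.pos_iff_nonempty.mp hd0
  obtain ⟨KX, hKX⟩ := hX_lip
  obtain ⟨KY, hKY⟩ := hY_lip
  set R : ℝ := ‖X 0‖ + ‖Y 0‖ + ((KX : ℝ) + (KY : ℝ)) * T + 1 with hRdef
  have hR : 0 < R := by positivity
  obtain ⟨g, hg_int, hg_bd⟩ := hint R hR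
  have h0T : (0:ℝ) ∈ Icc (0:ℝ) T := ⟨le_refl 0, hT.le⟩
  -- norm bounds on X and Y
  have hbd : ∀ (Z : ℝ → Fin d → ℝ) (KZ : NNReal), LipschitzOnWith KZ Z (Icc 0 T) →
      ∀ t ∈ Icc (0:ℝ) T, ‖Z t‖ ≤ ‖Z 0‖ + (KZ : ℝ) * T := by
    intro Z KZ hKZ t ht
    have h1 : dist (Z t) (Z 0) ≤ (KZ : ℝ) * T := by
      have := hKZ.dist_le_mul t ht 0 h0T
      rw [Real.dist_eq, sub_zero, abs_of_nonneg ht.1] at this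
      exact this.trans (mul_le_mul_of_nonneg_left ht.2 KZ.coe_nonneg)
    calc ‖Z t‖ = ‖Z 0 + (Z t - Z 0)‖ := by rw [add_sub_cancel]
      _ ≤ ‖Z 0‖ + ‖Z t - Z 0‖ := norm_add_le _ _
      _ = ‖Z 0‖ + dist (Z t) (Z 0) := by rw [dist_eq_norm]
      _ ≤ ‖Z 0‖ + (KZ : ℝ) * T := by linarith
  have hseg : ∀ t ∈ Icc (0:ℝ) T, ∀ s ∈ Icc (0:ℝ) 1, ‖Y t + s • (X t - Y t)‖ ≤ R := by
    intro t ht s hs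
    have hx := hbd X KX hKX t ht
    have hy := hbd Y KY hKY t ht
    have heq : Y t + s • (X t - Y t) = s • X t + (1 - s) • Y t := by
      ext i
      simp only [Pi.add_apply, Pi.smul_apply, Pi.sub_apply, smul_eq_mul]
      ring
    rw [heq]
    have h1 : ‖s • X t‖ ≤ ‖X t‖ := by
      rw [norm_smul, Real.norm_eq_abs, abs_of_nonneg hs.1]
      nlinarith [norm_nonneg (X t), hs.2]
    have h2 : ‖(1 - s) • Y t‖ ≤ ‖Y t‖ := by
      rw [norm_smul, Real.norm_eq_abs, abs_of_nonneg (by linarith [hs.2])]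
      nlinarith [norm_nonneg (Y t), hs.1]
    have h3 := norm_add_le (s • X t) ((1 - s) • Y t)
    have h4 : (KX : ℝ) * T ≥ 0 := mul_nonneg KX.coe_nonneg hT.le
    have h5 : (KY : ℝ) * T ≥ 0 := mul_nonneg KY.coe_nonneg hT.le
    rw [hRdef]
    nlinarith [norm_nonneg (X 0), norm_nonneg (Y 0)]
  -- the function u
  set u : ℝ → ℝ := fun t => Finset.univ.sup' hne (fun j => max (X t j - Y t j) 0) with hudef
  have hu_nonneg : ∀ t, 0 ≤ u t := by
    intro t
    obtain ⟨j, hj⟩ := hne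
    calc (0:ℝ) ≤ max (X t j - Y t j) 0 := le_max_right _ 0
      _ ≤ u t := Finset.le_sup' (fun j => max (X t j - Y t j) 0) hj
  have hu_ge : ∀ t j, X t j - Y t j ≤ u t := by
    intro t j
    calc X t j - Y t j ≤ max (X t j - Y t j) 0 := le_max_left _ 0
      _ ≤ u t := Finset.le_sup' (fun j => max (X t j - Y t j) 0) (Finset.mem_univ j)
  have hu0 : u 0 = 0 := by
    refine le_antisymm (Finset.sup'_le _ _ fun j _ => max_le ?_ le_rfl) (hu_nonneg 0)
    simpa [sub_nonpos] using hXY0 j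
  have hu_lip : LipschitzOnWith (KX + KY) u (Icc 0 T) := by
    have aux : ∀ s ∈ Icc (0:ℝ) T, ∀ t ∈ Icc (0:ℝ) T,
        u s ≤ u t + ((KX : ℝ) + KY) * dist s t := by
      intro s hs t ht
      apply Finset.sup'_le
      intro j _
      apply max_le
      · have h1 : |X s j - X t j| ≤ (KX : ℝ) * dist s t := by
          have h2 := norm_le_pi_norm (X s - X t) j
          rw [Pi.sub_apply, Real.norm_eq_abs] at h2
          refine h2.trans ?_
          have := hKX.dist_le_mul s hs t ht
          rwa [dist_eq_norm] at this
        have h1' : |Y s j - Y t j| ≤ (KY : ℝ) * dist s t := by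
          have h2 := norm_le_pi_norm (Y s - Y t) j
          rw [Pi.sub_apply, Real.norm_eq_abs] at h2
          refine h2.trans ?_
          have := hKY.dist_le_mul s hs t ht
          rwa [dist_eq_norm] at this
        have h3 : X t j - Y t j ≤ u t := hu_ge t j
        have h4 := abs_le.1 h1
        have h5 := abs_le.1 h1'
        linarith [h4.2, h5.1]
      · have := hu_nonneg t
        have h6 : (0:ℝ) ≤ ((KX : ℝ) + KY) * dist s t :=
          mul_nonneg (by positivity) dist_nonneg
        linarith
    apply LipschitzOnWith.of_dist_le_mul
    intro s hs t ht
    rw [Real.dist_eq, abs_sub_le_iff]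
    push_cast
    constructor
    · linarith [aux s hs t ht]
    · rw [dist_comm]
      linarith [aux t ht s hs]
  have hu_cont : ContinuousOn u (Icc 0 T) := hu_lip.continuousOn
  obtain ⟨v, hv_lip, hv_eq⟩ := hu_lip.extend_real
  have hv_diff : ∀ᵐ x : ℝ ∂volume, DifferentiableAt ℝ v x := hv_lip.ae_differentiableAt
  -- the key a.e. derivative bound
  have hIoo : ∀ᵐ t ∂volume.restrict (Icc 0 T), t ∈ Ioo 0 T := by
    have h1 : ∀ᵐ t : ℝ ∂volume, t ∉ ({0, T} : Set ℝ) := by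
      rw [ae_iff]
      simp only [not_not]
      exact measure_mono_null (fun x hx => hx)
        (((Set.finite_singleton T).insert 0).countable.measure_zero _)
    have h2 : ∀ᵐ t ∂volume.restrict (Icc 0 T), t ∉ ({0, T} : Set ℝ) :=
      h1.filter_mono (ae_mono Measure.restrict_le_self)
    filter_upwards [h2, ae_restrict_mem measurableSet_Icc] with t ht1 ht2
    simp only [Set.mem_insert_iff, Set.mem_singleton_iff, not_or] at ht1
    exact ⟨lt_of_le_of_ne ht2.1 (Ne.symm ht1.1), lt_of_le_of_ne ht2.2 ht1.2⟩
  have hae_main : ∀ᵐ t ∂volume.restrict (Icc 0 T),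
      ∃ w, HasDerivAt v w t ∧ w ≤ (d : ℝ) * g t * u t := by
    filter_upwards [hIoo, hdiff, hg_bd, hoffdiag, hX, hY,
      hv_diff.filter_mono (ae_mono Measure.restrict_le_self)]
      with t ht hBdiff hgbd hoff hXt hYt hvd
    have htIcc : t ∈ Icc (0:ℝ) T := Ioo_subset_Icc_self ht
    have nbhd : Icc (0:ℝ) T ∈ 𝓝 t := Icc_mem_nhds ht.1 ht.2
    refine ⟨deriv v t, hvd.hasDerivAt, ?_⟩
    rcases eq_or_lt_of_le (hu_nonneg t) with hc | hc
    · -- u t = 0 : local minimum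
      have hmin : IsLocalMin v t := by
        filter_upwards [nbhd] with s hsmem
        rw [← hv_eq hsmem, ← hv_eq htIcc, ← hc]
        exact hu_nonneg s
      rw [hmin.hasDerivAt_eq_zero hvd.hasDerivAt, ← hc, mul_zero]
    · -- u t > 0
      obtain ⟨j, -, hj⟩ := Finset.exists_mem_eq_sup' hne (fun j => max (X t j - Y t j) 0)
      have hjval : X t j - Y t j = u t := by
        have hj2 : u t = max (X t j - Y t j) 0 := hj
        rcases le_or_gt (X t j - Y t j) 0 with hm | hm
        · exfalso
          rw [hj2, max_eq_right hm] at hc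
          exact lt_irrefl 0 hc
        · rw [hj2, max_eq_left hm.le]
      have hhd : HasDerivAt (fun s => X s j - Y s j) (X' t j - Y' t j) t := by
        have hx1 : HasDerivAt (fun s => X s j) (X' t j) t :=
          (ContinuousLinearMap.proj (R := ℝ) (φ := fun _ : Fin d => ℝ) j).hasFDerivAt.comp_hasDerivAt t hXt.1
        have hy1 : HasDerivAt (fun s => Y s j) (Y' t j) t :=
          (ContinuousLinearMap.proj (R := ℝ) (φ := fun _ : Fin d => ℝ) j).hasFDerivAt.comp_hasDerivAt t hYt.1
        exact hx1.sub hy1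
      have hFd : HasDerivAt (fun s => (X s j - Y s j) - v s)
          (X' t j - Y' t j - deriv v t) t := hhd.sub hvd.hasDerivAt
      have hmax : IsLocalMax (fun s => (X s j - Y s j) - v s) t := by
        filter_upwards [nbhd] with s hsmem
        have h1 : X s j - Y s j ≤ u s := hu_ge s j
        show X s j - Y s j - v s ≤ X t j - Y t j - v t
        rw [← hv_eq hsmem, ← hv_eq htIcc, hjval]
        linarith
      have hderiv_eq : X' t j - Y' t j - deriv v t = 0 := hmax.hasDerivAt_eq_zero hFd
      have step1 : deriv v t ≤ B t (X t) j - B t (Y t) j := by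
        have h1 := hXt.2 j
        have h2 := hYt.2 j
        linarith
      refine step1.trans ?_
      -- mean value argument along the segment
      set c : ℝ := u t with hcdef
      set w : Fin d → ℝ := X t - Y t with hwdef
      set z : ℝ → Fin d → ℝ := fun s => Y t + s • w with hzdef
      have hz : ∀ s : ℝ, HasDerivAt z w s := by
        intro s
        have h := ((hasDerivAt_id s).smul_const w).const_add (Y t)
        rw [one_smul] at h
        exact h
      have hψd : ∀ s : ℝ, HasDerivAt (fun s => B t (z s) j)
          ((fderiv ℝ (B t) (z s)) w j) s := by
        intro s
        have h1 : HasDerivAt (fun s => B t (z s)) ((fderiv ℝ (B t) (z s)) w) s :=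
          ((hBdiff (z s)).hasFDerivAt).comp_hasDerivAt s (hz s)
        exact (ContinuousLinearMap.proj (R := ℝ) (φ := fun _ : Fin d => ℝ) j).hasFDerivAt.comp_hasDerivAt s h1
      have hDb : ∀ s ∈ Icc (0:ℝ) 1, (fderiv ℝ (B t) (z s)) w j ≤ (d : ℝ) * g t * c := by
        intro s hs
        set D := fderiv ℝ (B t) (z s) with hDdef
        have hzR : ‖z s‖ ≤ R := hseg t htIcc s hs
        have hDnorm : ‖D‖ ≤ g t := hgbd (z s) hzR
        have hw : w = ∑ i : Fin d, (w i) • (Pi.single i (1:ℝ) : Fin d → ℝ) := by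
          funext k
          rw [Finset.sum_apply]
          simp [Pi.single_apply]
        have hsum : D w j = ∑ i, (w i) * (D (Pi.single i 1) j) := by
          conv_lhs => rw [hw]
          rw [map_sum, Finset.sum_apply]
          refine Finset.sum_congr rfl fun i _ => ?_
          rw [D.map_smul]
          simp [smul_eq_mul]
        rw [hsum]
        have hbound : ∀ i : Fin d, |D (Pi.single i 1) j| ≤ g t := by
          intro i
          have h1 : |D (Pi.single i 1) j| ≤ ‖D (Pi.single i 1)‖ := by
            have := norm_le_pi_norm (D (Pi.single i 1)) j
            rwa [Real.norm_eq_abs] at this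
          have h2 := D.le_opNorm (Pi.single i (1:ℝ) : Fin d → ℝ)
          have h3 : ‖(Pi.single i (1:ℝ) : Fin d → ℝ)‖ = 1 := by
            rw [Pi.norm_single]; norm_num
          rw [h3, mul_one] at h2
          linarith
        have hterm : ∀ i : Fin d, w i * D (Pi.single i 1) j ≤ c * (g t) := by
          intro i
          have hbi := hbound i
          have habs := abs_le.1 hbi
          by_cases hij : i = j
          · subst hij
            have hwi : w i = c := by rw [hwdef, Pi.sub_apply]; exact hjval
            rw [hwi]
            calc c * D (Pi.single i 1) i ≤ c * |D (Pi.single i 1) i| :=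
                  mul_le_mul_of_nonneg_left (le_abs_self _) hc.le
              _ ≤ c * g t := mul_le_mul_of_nonneg_left hbi hc.le
          · have ha : 0 ≤ D (Pi.single i 1) j := hoff (z s) i j hij
            have hwi : w i ≤ c := by
              rw [hwdef, Pi.sub_apply, hcdef]
              exact hu_ge t i
            calc w i * D (Pi.single i 1) j ≤ c * D (Pi.single i 1) j :=
                  mul_le_mul_of_nonneg_right hwi ha
              _ ≤ c * |D (Pi.single i 1) j| :=
                  mul_le_mul_of_nonneg_left (le_abs_self _) hc.le
              _ ≤ c * g t := mul_le_mul_of_nonneg_left hbi hc.le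
        calc (∑ i, w i * D (Pi.single i 1) j) ≤ ∑ _i : Fin d, c * g t :=
              Finset.sum_le_sum (fun i _ => hterm i)
          _ = (d : ℝ) * (c * g t) := by
              rw [Finset.sum_const, Finset.card_univ, Fintype.card_fin]
              simp [nsmul_eq_mul]
          _ = (d : ℝ) * g t * c := by ring
      -- monotonicity argument
      set M : ℝ := (d : ℝ) * g t * c with hMdef
      have hχ : ∀ s : ℝ, HasDerivAt (fun s => B t (z s) j - M * s)
          ((fderiv ℝ (B t) (z s)) w j - M) s := by
        intro s
        exact (hψd s).sub (by simpa using (hasDerivAt_id s).const_mul M)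
      have hanti : AntitoneOn (fun s => B t (z s) j - M * s) (Icc 0 1) := by
        apply antitoneOn_of_deriv_nonpos (convex_Icc 0 1)
        · exact fun s _ => (hχ s).continuousAt.continuousWithinAt
        · exact fun s _ => (hχ s).differentiableAt.differentiableWithinAt
        · intro s hs
          rw [(hχ s).deriv]
          rw [interior_Icc] at hs
          have := hDb s (Ioo_subset_Icc_self hs)
          linarith
      have h10 := hanti (left_mem_Icc.2 zero_le_one) (right_mem_Icc.2 zero_le_one) zero_le_one
      have hz1 : z 1 = X t := by
        rw [hzdef]
        simp only [one_smul, hwdef]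
        rw [add_sub_cancel]
      have hz0 : z 0 = Y t := by
        rw [hzdef]
        simp only [zero_smul, add_zero]
      simp only [hz1, hz0, mul_one, mul_zero, sub_zero] at h10
      linarith
  -- Gronwall
  have hucont := hu_cont
  have key2 : ∀ a b : ℝ, 0 ≤ a → a ≤ b → b ≤ T →
      u b - u a ≤ ∫ s in a..b, ((d : ℝ) * g s) * u s := by
    intro a b h0 hab hbT
    have hIcc_sub : Icc a b ⊆ Icc 0 T := Icc_subset_Icc h0 hbT
    have haI : a ∈ Icc (0:ℝ) T := ⟨h0, hab.trans hbT⟩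
    have hbI : b ∈ Icc (0:ℝ) T := ⟨h0.trans hab, hbT⟩
    rw [show u b - u a = v b - v a by rw [hv_eq haI, hv_eq hbI]]
    have hφint : IntegrableOn (fun s => ((d : ℝ) * g s) * u s) (Icc a b) := by
      have h1 : IntervalIntegrable (fun s => (d : ℝ) * g s) volume a b := by
        rw [intervalIntegrable_iff_integrableOn_Ioc_of_le hab]
        exact MeasureTheory.IntegrableOn.mono_set (hg_int.const_mul ((d : ℝ)))
          (Ioc_subset_Icc_self.trans hIcc_sub)
      have h2 : IntervalIntegrable (fun s => ((d : ℝ) * g s) * u s) volume a b := by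
        apply h1.mul_continuousOn
        apply hu_cont.mono
        rw [uIcc_of_le hab]
        exact hIcc_sub
      rw [intervalIntegrable_iff_integrableOn_Ioc_of_le hab] at h2
      rwa [integrableOn_Icc_iff_integrableOn_Ioc]
    apply lip_sub_le_integral hab hv_lip hφint
    have := ae_restrict_of_ae_restrict_of_subset hIcc_sub hae_main
    filter_upwards [this] with s hs
    obtain ⟨w, hw1, hw2⟩ := hs
    exact ⟨w, hw1, by simpa [mul_assoc] using hw2⟩
  have hψ0 : 0 ≤ᵐ[volume.restrict (Icc 0 T)] (fun s => (d : ℝ) * g s) := by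
    filter_upwards [hg_bd] with s hsb
    have h1 : ‖fderiv ℝ (B s) 0‖ ≤ g s := hsb 0 (by simp [hR.le])
    have h2 : (0:ℝ) ≤ g s := le_trans (norm_nonneg _) h1
    positivity
  have hψint : IntegrableOn (fun s => (d : ℝ) * g s) (Icc 0 T) := hg_int.const_mul _
  have hzero := gronwall_zero hT.le hu_cont hu0 (fun t ht => hu_nonneg t) hψint hψ0 key2
  intro t ht i
  have h1 : X t i - Y t i ≤ u t := hu_ge t i
  rw [hzero t ht] at h1
  linarith
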